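/- For every integer n ≥ 1 there exist a group G of orientation-preserving homeomorphisms of [0,1] generated by n elements, and points z¹, …, zⁿ ∈ (0,1), such that: the set of accumulation points of the G-orbit of z¹ is exactly {0, 1}; and for each 1 ≤ k ≤ n − 1, the G-orbit of z^{k+1} is disjoint from the closure of the G-orbit of z^k, and the set of accumulation points of the G-orbit of z^{k+1} is exactly the closure of the G-orbit of z^k. (In particular G admits a level n orbit: a nested chain of n orbits, each accumulating exactly on the closure of the previous one.) -/

import Mathlib

open Set Topology Filter

/-- Orientation-preserving homeomorphisms of `[0,1]`, i.e. increasing homeomorphisms of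
`[0,1]` onto itself, are exactly the order isomorphisms of the unit interval
(an increasing bijection of `[0,1]` is automatically a homeomorphism). -/
abbrev IntervalHomeo := unitInterval ≃o unitInterval

/-- The `G`-orbit of a point `x`. -/
def orbit (G : Subgroup IntervalHomeo) (x : unitInterval) : Set unitInterval :=
  {y | ∃ g ∈ G, g x = y}

/-- A set `M` is `G`-invariant if `g(M) = M` for every `g ∈ G`. -/
def Invariant (G : Subgroup IntervalHomeo) (M : Set unitInterval) : Prop :=
  ∀ g ∈ G, ⇑(g : IntervalHomeo) '' M = M

/-- The open interval `(0,1)` inside `[0,1]`. -/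
def openI : Set unitInterval := {x | (x : ℝ) ∈ Set.Ioo (0 : ℝ) 1}

/-- `M` is contained in `S` and closed in the subspace topology of `S`. -/
def ClosedIn (S M : Set unitInterval) : Prop := M ⊆ S ∧ closure M ∩ S ⊆ M

noncomputable section

/-- base map ℝ → (-1,1) -/
def bs (u : ℝ) : ℝ := u / (1 + |u|)

lemma bs_abs_lt (u : ℝ) : |bs u| < 1 := by
  have h1 : (0:ℝ) < 1 + |u| := by positivity
  rw [bs, abs_div, abs_of_pos h1, div_lt_one h1]
  linarith [abs_nonneg u]

lemma bs_strictMono : StrictMono bs := by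
  intro u v huv
  have h1 : (0:ℝ) < 1 + |u| := by positivity
  have h2 : (0:ℝ) < 1 + |v| := by positivity
  rw [bs, bs, div_lt_div_iff₀ h1 h2]
  rcases le_or_gt 0 u with hu | hu
  · have hv : 0 < v := lt_of_le_of_lt hu huv
    rw [abs_of_nonneg hu, abs_of_pos hv]; nlinarith
  · rcases le_or_gt v 0 with hv | hv
    · rw [abs_of_neg hu, abs_of_nonpos hv]; nlinarith
    · rw [abs_of_neg hu, abs_of_pos hv]; nlinarith

lemma bs_continuous : Continuous bs := by
  apply Continuous.div continuous_id (by continuity)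
  intro x; positivity

/-- inverse of bs on (-1,1) -/
def bsInv (v : ℝ) : ℝ := v / (1 - |v|)

lemma bs_bsInv {v : ℝ} (hv : |v| < 1) : bs (bsInv v) = v := by
  have h1 : (0:ℝ) < 1 - |v| := by linarith
  have habs : |bsInv v| = |v| / (1 - |v|) := by
    rw [bsInv, abs_div, abs_of_pos h1]
  have h2 : 1 + |bsInv v| = 1 / (1 - |v|) := by
    rw [habs]; field_simp; ring
  rw [bs, h2, bsInv]
  field_simp

lemma bsInv_bs (u : ℝ) : bsInv (bs u) = u := by
  have h1 : (0:ℝ) < 1 + |u| := by positivity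
  have habs : |bs u| = |u| / (1 + |u|) := by rw [bs, abs_div, abs_of_pos h1]
  have h2 : 1 - |bs u| = 1 / (1 + |u|) := by rw [habs]; field_simp; ring
  rw [bsInv, h2, bs]
  field_simp

lemma bs_tendsto_top : Tendsto bs atTop (𝓝 1) := by
  have h : ∀ᶠ u in atTop, bs u = 1 - 1/(1+u) := by
    filter_upwards [eventually_ge_atTop (0:ℝ)] with u hu
    rw [bs, abs_of_nonneg hu]
    have : (0:ℝ) < 1 + u := by linarith
    field_simp
    ring
  rw [tendsto_congr' h]
  have : Tendsto (fun u : ℝ => 1/(1+u)) atTop (𝓝 0) := by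
    simp only [one_div]
    exact Tendsto.comp tendsto_inv_atTop_zero (tendsto_atTop_add_const_left _ _ tendsto_id)
  simpa using (tendsto_const_nhds (x := (1:ℝ))).sub this

lemma bs_tendsto_bot : Tendsto bs atBot (𝓝 (-1)) := by
  have h : ∀ᶠ u in atBot, bs u = -1 + 1/(1-u) := by
    filter_upwards [eventually_le_atBot (0:ℝ)] with u hu
    rw [bs, abs_of_nonpos hu]
    have h0 : (1:ℝ) - u ≠ 0 := by linarith
    have h1 : (1:ℝ) + -u = 1 - u := by ring
    rw [h1, div_eq_iff h0, add_mul, one_div, neg_one_mul, inv_mul_cancel₀ h0]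
    ring
  rw [tendsto_congr' h]
  have : Tendsto (fun u : ℝ => 1/(1-u)) atBot (𝓝 0) := by
    simp only [one_div, sub_eq_add_neg]
    have hneg : Tendsto (fun u:ℝ => -u) atBot atTop := tendsto_neg_atBot_atTop
    exact Tendsto.comp tendsto_inv_atTop_zero (tendsto_atTop_add_const_left _ _ hneg)
  simpa using (tendsto_const_nhds (x := (-1:ℝ))).add this

/-- our σ : ℝ ≃o (0,1) as a function -/
def sg (u : ℝ) : ℝ := (1 + bs u) / 2

def sgInv (y : ℝ) : ℝ := bsInv (2*y - 1)

lemma sg_mem (u : ℝ) : sg u ∈ Ioo (0:ℝ) 1 := by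
  have := bs_abs_lt u
  rw [abs_lt] at this
  constructor <;> [skip; skip] <;> (rw [sg]; cases this; linarith)

lemma sg_strictMono : StrictMono sg := fun u v h => by
  have := bs_strictMono h; rw [sg, sg]; linarith

lemma sg_inj : Function.Injective sg := sg_strictMono.injective

lemma sg_continuous : Continuous sg := by
  unfold sg
  exact (continuous_const.add bs_continuous).div_const 2

lemma sgInv_sg (u : ℝ) : sgInv (sg u) = u := by
  rw [sgInv, sg]
  have : 2 * ((1 + bs u)/2) - 1 = bs u := by ring
  rw [this, bsInv_bs]

lemma sg_sgInv {y : ℝ} (hy : y ∈ Ioo (0:ℝ) 1) : sg (sgInv y) = y := by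
  rw [sgInv, sg]
  have habs : |2*y - 1| < 1 := by rw [abs_lt]; exact ⟨by linarith [hy.1], by linarith [hy.2]⟩
  rw [bs_bsInv habs]; ring

lemma sg_tendsto_top : Tendsto sg atTop (𝓝 1) := by
  have : Tendsto (fun u => (1 + bs u)/2) atTop (𝓝 ((1+1)/2)) :=
    ((tendsto_const_nhds.add bs_tendsto_top).div_const 2)
  simpa [sg] using this.congr (fun u => rfl) |>.congr' (by rfl) |>.mono_right (by norm_num)

lemma sg_tendsto_bot : Tendsto sg atBot (𝓝 0) := by
  have : Tendsto (fun u => (1 + bs u)/2) atBot (𝓝 ((1+(-1))/2)) :=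
    ((tendsto_const_nhds.add bs_tendsto_bot).div_const 2)
  norm_num at this; exact this


/-! ### The maps Ψ_j^c -/

open Classical in
/-- `Psi j c`: level-`j` translation-by-`c` map on ℝ. `Psi 0 c = (+c)`;
`Psi (j+1) c` is `sg ∘ Psi j c ∘ sgInv` on `(0,1)`, identity elsewhere. -/
noncomputable def Psi : ℕ → ℤ → ℝ → ℝ
  | 0, c, u => u + c
  | (j+1), c, u => if u ∈ Ioo (0:ℝ) 1 then sg (Psi j c (sgInv u)) else u

lemma psi_zero_def (c : ℤ) (u : ℝ) : Psi 0 c u = u + c := rfl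

lemma psi_succ_def (j : ℕ) (c : ℤ) (u : ℝ) :
    Psi (j+1) c u = if u ∈ Ioo (0:ℝ) 1 then sg (Psi j c (sgInv u)) else u := by
  simp [Psi]

lemma psi_sg (j : ℕ) (c : ℤ) (u : ℝ) : Psi (j+1) c (sg u) = sg (Psi j c u) := by
  rw [psi_succ_def, if_pos (sg_mem u), sgInv_sg]

lemma psi_not_mem {j : ℕ} (c : ℤ) {u : ℝ} (hu : u ∉ Ioo (0:ℝ) 1) :
    Psi (j+1) c u = u := by
  rw [psi_succ_def, if_neg hu]

lemma psi_mem_Ioo {j : ℕ} (c : ℤ) {u : ℝ} (hu : u ∈ Ioo (0:ℝ) 1) :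
    Psi (j+1) c u ∈ Ioo (0:ℝ) 1 := by
  rw [psi_succ_def, if_pos hu]; exact sg_mem _

lemma psi_id (j : ℕ) (u : ℝ) : Psi j 0 u = u := by
  induction j generalizing u with
  | zero => simp [psi_zero_def]
  | succ j ih =>
    rw [psi_succ_def]
    split_ifs with h
    · rw [ih, sg_sgInv h]
    · rfl

lemma psi_comp (j : ℕ) (c c' : ℤ) (u : ℝ) : Psi j c (Psi j c' u) = Psi j (c' + c) u := by
  induction j generalizing u with
  | zero => simp [psi_zero_def]; push_cast; ring
  | succ j ih =>
    by_cases h : u ∈ Ioo (0:ℝ) 1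
    · rw [psi_succ_def j c', if_pos h, psi_sg, ih]
      rw [psi_succ_def, if_pos h]
    · rw [psi_not_mem c' h, psi_not_mem c h, psi_not_mem (c'+c) h]

lemma psi_strictMono (j : ℕ) (c : ℤ) : StrictMono (Psi j c) := by
  induction j with
  | zero => intro u v h; simp only [psi_zero_def]; linarith
  | succ j ih =>
    intro u v huv
    by_cases hu : u ∈ Ioo (0:ℝ) 1 <;> by_cases hv : v ∈ Ioo (0:ℝ) 1
    · rw [psi_succ_def, if_pos hu, psi_succ_def, if_pos hv]
      apply sg_strictMono; apply ih
      have : sg (sgInv u) < sg (sgInv v) := by rw [sg_sgInv hu, sg_sgInv hv]; exact huv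
      exact lt_of_not_ge fun hle => absurd this (not_lt.mpr (sg_strictMono.monotone hle))
    · have h1 : (1:ℝ) ≤ v := by
        rcases lt_or_ge v 1 with h | h
        · exact absurd ⟨lt_trans hu.1 huv, h⟩ hv
        · exact h
      rw [psi_not_mem c hv]
      exact lt_of_lt_of_le (psi_mem_Ioo c hu).2 h1
    · have h0 : u ≤ 0 := by
        rcases lt_or_ge 0 u with h | h
        · exact absurd ⟨h, lt_trans huv hv.2⟩ hu
        · exact h
      rw [psi_not_mem c hu]
      exact lt_of_le_of_lt h0 (psi_mem_Ioo c hv).1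
    · rw [psi_not_mem c hu, psi_not_mem c hv]; exact huv

lemma psi_maps_Icc {j : ℕ} (c : ℤ) {u : ℝ} (hu : u ∈ Icc (0:ℝ) 1) :
    Psi (j+1) c u ∈ Icc (0:ℝ) 1 := by
  by_cases h : u ∈ Ioo (0:ℝ) 1
  · exact Ioo_subset_Icc_self (psi_mem_Ioo c h)
  · rw [psi_not_mem c h]; exact hu

/-! ### The generators as `IntervalHomeo` -/

/-- the generator of index `j` (acting at level `j+1`). -/
noncomputable def gen (j : ℕ) : IntervalHomeo where
  toFun := fun x => ⟨Psi (j+1) 1 x, psi_maps_Icc 1 x.2⟩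
  invFun := fun x => ⟨Psi (j+1) (-1) x, psi_maps_Icc (-1) x.2⟩
  left_inv := fun x => by
    ext; simp only
    rw [psi_comp]; norm_num [psi_id]
  right_inv := fun x => by
    ext; simp only
    rw [psi_comp]; norm_num [psi_id]
  map_rel_iff' := by
    intro x y
    exact ⟨fun h => Subtype.coe_le_coe.mp
        ((psi_strictMono (j+1) 1).le_iff_le.mp h),
      fun h => (psi_strictMono (j+1) 1).monotone (Subtype.coe_le_coe.mpr h)⟩

lemma gen_coe (j : ℕ) (x : unitInterval) : (gen j x : ℝ) = Psi (j+1) 1 x := rfl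

lemma gen_zpow_coe (j : ℕ) (c : ℤ) (x : unitInterval) :
    (((gen j) ^ c) x : ℝ) = Psi (j+1) c x := by
  induction c using Int.induction_on with
  | zero => simp [psi_id]
  | succ i ih =>
    have : (gen j) ^ ((i:ℤ)+1) = (gen j) * (gen j) ^ (i:ℤ) := by
      rw [add_comm, zpow_add, zpow_one]
    rw [this]
    show (Psi (j+1) 1 (((gen j) ^ (i:ℤ)) x : ℝ)) = _
    rw [ih, psi_comp]
  | pred i ih =>
    have : (gen j) ^ (-(i:ℤ)-1) = (gen j)⁻¹ * (gen j) ^ (-(i:ℤ)) := by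
      rw [sub_eq_add_neg, add_comm, zpow_add, zpow_neg_one]
    rw [this]
    show (Psi (j+1) (-1) (((gen j) ^ (-(i:ℤ))) x : ℝ)) = _
    rw [ih, psi_comp, sub_eq_add_neg]

/-! ### The orbit sets in ℝ-coordinates -/

/-- `Dset k` : the level-(k+1) orbit, in `sg`-preimage coordinates.
`Dset 0 = ℤ`, `Dset (k+1) = ℤ + sg '' Dset k`. -/
def Dset : ℕ → Set ℝ
  | 0 => {u | ∃ m : ℤ, u = m}
  | (k+1) => {u | ∃ m : ℤ, ∃ d ∈ Dset k, u = m + sg d}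

lemma int_not_mem_Ioo {m : ℤ} : (m : ℝ) ∉ Ioo (0:ℝ) 1 := by
  intro ⟨h1, h2⟩
  have : (0:ℤ) < m := by exact_mod_cast h1
  have : m < 1 := by exact_mod_cast h2
  omega

lemma dset_not_mem_Ioo {m : ℤ} {d : ℝ} (hm : m ≠ 0) (hd : d ∈ Ioo (0:ℝ) 1) :
    (m : ℝ) + d ∉ Ioo (0:ℝ) 1 := by
  intro ⟨h1, h2⟩
  rcases lt_or_gt_of_ne hm with h | h
  · have hle : m ≤ -1 := by omega
    have : (m:ℝ) ≤ -1 := by exact_mod_cast hle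
    linarith [hd.2]
  · have : (1:ℝ) ≤ m := by exact_mod_cast h
    linarith [hd.1]

lemma dset_add_int {k : ℕ} {d : ℝ} (hd : d ∈ Dset k) (c : ℤ) : d + c ∈ Dset k := by
  cases k with
  | zero => obtain ⟨m, rfl⟩ := hd; exact ⟨m + c, by push_cast; ring⟩
  | succ k =>
    obtain ⟨m, d', hd', rfl⟩ := hd
    exact ⟨m + c, d', hd', by push_cast; ring⟩

lemma dset_nonempty (k : ℕ) : (sg^[k]) 0 ∈ Dset k := by
  induction k with
  | zero => exact ⟨0, by simp⟩
  | succ k ih =>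
    refine ⟨0, (sg^[k]) 0, ih, ?_⟩
    rw [Function.iterate_succ_apply']
    simp

/-- invariance: every `Psi j c` preserves every `Dset k`. -/
lemma psi_dset {k : ℕ} (j : ℕ) (c : ℤ) {d : ℝ} (hd : d ∈ Dset k) : Psi j c d ∈ Dset k := by
  induction k generalizing j d with
  | zero =>
    obtain ⟨m, rfl⟩ := hd
    cases j with
    | zero => exact ⟨m + c, by push_cast [psi_zero_def]; ring⟩
    | succ j => rw [psi_not_mem c int_not_mem_Ioo]; exact ⟨m, rfl⟩
  | succ k ih =>
    obtain ⟨m, d', hd', rfl⟩ := hd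
    cases j with
    | zero => exact ⟨m + c, d', hd', by push_cast [psi_zero_def]; ring⟩
    | succ j =>
      by_cases hm : m = 0
      · subst hm
        simp only [Int.cast_zero, zero_add]
        rw [psi_succ_def, if_pos (sg_mem d'), sgInv_sg]
        exact ⟨0, Psi j c d', ih j hd', by rw [Int.cast_zero, zero_add]⟩
      · rw [psi_not_mem c (dset_not_mem_Ioo hm (sg_mem d'))]
        exact ⟨m, d', hd', rfl⟩

/-! ### Word lemma: every point of `Dset k` is reached from the basepoint -/

noncomputable def evalWord (L : List (ℕ × ℤ)) (u : ℝ) : ℝ :=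
  L.foldr (fun p v => Psi (p.1 + 1) p.2 v) u

lemma evalWord_nil (u : ℝ) : evalWord [] u = u := rfl

lemma evalWord_cons (p : ℕ × ℤ) (L : List (ℕ × ℤ)) (u : ℝ) :
    evalWord (p :: L) u = Psi (p.1 + 1) p.2 (evalWord L u) := rfl

lemma evalWord_shift (L : List (ℕ × ℤ)) (u : ℝ) :
    evalWord (L.map (fun p => (p.1 + 1, p.2))) (sg u) = sg (evalWord L u) := by
  induction L with
  | nil => rfl
  | cons p L ih =>
    rw [List.map_cons, evalWord_cons, evalWord_cons, ih]
    exact psi_sg _ _ _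

lemma exists_word {k : ℕ} {d : ℝ} (hd : d ∈ Dset k) :
    ∃ L : List (ℕ × ℤ), (∀ p ∈ L, p.1 ≤ k) ∧ evalWord L ((sg^[k+1]) 0) = sg d := by
  induction k generalizing d with
  | zero =>
    obtain ⟨m, rfl⟩ := hd
    refine ⟨[(0, m)], by simp, ?_⟩
    rw [evalWord_cons, evalWord_nil]
    show Psi 1 m (sg ((sg^[0]) 0)) = _
    rw [psi_sg, psi_zero_def]
    norm_num
  | succ k ih =>
    obtain ⟨m, d', hd', rfl⟩ := hd
    obtain ⟨L', hL', hev⟩ := ih hd'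
    refine ⟨(0, m) :: L'.map (fun p => (p.1 + 1, p.2)), ?_, ?_⟩
    · intro p hp
      rcases List.mem_cons.mp hp with rfl | hp
      · omega
      · obtain ⟨q, hq, rfl⟩ := List.mem_map.mp hp
        exact Nat.succ_le_succ (hL' q hq)
    · rw [evalWord_cons]
      have : (sg^[k+1+1]) 0 = sg ((sg^[k+1]) 0) := by rw [Function.iterate_succ_apply']
      rw [this, evalWord_shift, hev, psi_sg, psi_zero_def]
      congr 1
      push_cast
      ring

/-! ### Topology of the sets `Dset k` in ℝ -/

def Zplus (T : Set ℝ) : Set ℝ := {x | ∃ m : ℤ, ∃ t ∈ T, x = m + t}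

lemma dset_succ_eq (k : ℕ) : Dset (k+1) = Zplus (sg '' Dset k) := by
  ext x
  constructor
  · rintro ⟨m, d, hd, rfl⟩; exact ⟨m, sg d, ⟨d, hd, rfl⟩, rfl⟩
  · rintro ⟨m, t, ⟨d, hd, rfl⟩, rfl⟩; exact ⟨m, d, hd, rfl⟩

lemma add_decomp {m m' : ℤ} {a a' : ℝ} (ha : a ∈ Ioo (0:ℝ) 1) (ha' : a' ∈ Ioo (0:ℝ) 1)
    (h : (m:ℝ) + a = m' + a') : m = m' ∧ a = a' := by
  have h1 : ((m - m' : ℤ) : ℝ) = a' - a := by push_cast; linarith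
  have h2 : |((m - m' : ℤ) : ℝ)| < 1 := by
    rw [h1, abs_lt]; exact ⟨by linarith [ha.2, ha'.1], by linarith [ha.1, ha'.2]⟩
  have h3 : m - m' = 0 := by
    have := abs_lt.mp h2
    have l1 : (-1 : ℤ) < m - m' := by exact_mod_cast this.1
    have l2 : (m - m' : ℤ) < 1 := by exact_mod_cast this.2
    omega
  have hm : m = m' := by omega
  exact ⟨hm, by subst hm; linarith⟩

lemma isClosed_dset0 : IsClosed (Dset 0) := by
  have : Dset 0 = Set.range (fun m : ℤ => (m : ℝ)) := by
    ext x; exact ⟨fun ⟨m, hm⟩ => ⟨m, hm.symm⟩, fun ⟨m, hm⟩ => ⟨m, hm.symm⟩⟩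
  rw [this]
  exact Int.isClosedEmbedding_coe_real.isClosed_range

lemma zplus_union_01 (A : Set ℝ) : Zplus (A ∪ {0, 1}) = Zplus A ∪ Dset 0 := by
  ext x
  constructor
  · rintro ⟨m, t, ht | ht, rfl⟩
    · exact Or.inl ⟨m, t, ht, rfl⟩
    · rcases ht with rfl | rfl
      · exact Or.inr ⟨m, by norm_num⟩
      · exact Or.inr ⟨m + 1, by push_cast; ring⟩
  · rintro (⟨m, t, ht, rfl⟩ | ⟨m, rfl⟩)
    · exact ⟨m, t, Or.inl ht, rfl⟩
    · exact ⟨m, 0, Or.inr (Or.inl rfl), by norm_num⟩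

lemma closure_Zplus {T : Set ℝ} (hT : T ⊆ Icc (0:ℝ) 1) (h0 : (0:ℝ) ∈ closure T) :
    closure (Zplus T) = Zplus (closure T) := by
  apply Subset.antisymm
  · intro x hx
    by_cases hint : ∃ m : ℤ, x = (m : ℝ)
    · obtain ⟨m, rfl⟩ := hint
      exact ⟨m, 0, h0, by norm_num⟩
    · push_neg at hint
      set m := ⌊x⌋ with hm
      have hfl : (m:ℝ) ≤ x := Int.floor_le x
      have hfl2 : x < m + 1 := Int.lt_floor_add_one x
      have hne : (m:ℝ) ≠ x := fun h => hint m h.symm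
      have hlt : (m:ℝ) < x := lt_of_le_of_ne hfl hne
      refine ⟨m, x - m, ?_, by ring⟩
      rw [Metric.mem_closure_iff]
      intro ε hε
      set δ := min ε (min (x - m) (m + 1 - x)) with hδ
      have hδ0 : 0 < δ := by
        apply lt_min hε; apply lt_min <;> linarith
      obtain ⟨y, hy, hxy⟩ := Metric.mem_closure_iff.mp hx δ hδ0
      obtain ⟨m', t, ht, rfl⟩ := hy
      have hdist := hxy
      rw [Real.dist_eq, abs_lt] at hdist
      have hyI : (m:ℝ) < m' + t ∧ (m':ℝ) + t < m + 1 := by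
        constructor
        · have : δ ≤ x - m := le_trans (min_le_right _ _) (min_le_left _ _)
          linarith [hdist.2]
        · have : δ ≤ m + 1 - x := le_trans (min_le_right _ _) (min_le_right _ _)
          linarith [hdist.1]
      have htI : t ∈ Ioo (0:ℝ) 1 := by
        have h01 := hT ht
        constructor
        · rcases lt_or_ge 0 t with h | h
          · exact h
          · exfalso
            have ht0 : t = 0 := le_antisymm h h01.1
            subst ht0
            have : (m:ℝ) < m' := by linarith [hyI.1]
            have : (m':ℝ) < m + 1 := by linarith [hyI.2]
            have l1 : m < m' := by exact_mod_cast ‹(m:ℝ) < m'›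
            have l2 : m' < m + 1 := by exact_mod_cast ‹(m':ℝ) < m + 1›
            omega
        · rcases lt_or_ge t 1 with h | h
          · exact h
          · exfalso
            have ht1 : t = 1 := le_antisymm h01.2 h
            subst ht1
            have l1 : (m:ℝ) < m' + 1 := hyI.1
            have l2 : (m':ℝ) + 1 < m + 1 := hyI.2
            have l1' : m < m' + 1 := by exact_mod_cast l1
            have l2' : m' + 1 < m + 1 := by exact_mod_cast l2
            omega
      -- m' = m
      have hm' : m' = m := by
        have hmem2 : ((m':ℝ) + t - m : ℝ) ∈ Ioo (0:ℝ) 1 :=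
          ⟨by linarith [hyI.1], by linarith [hyI.2]⟩
        exact (add_decomp htI hmem2 (by ring)).1
      subst hm'
      refine ⟨t, ht, ?_⟩
      rw [Real.dist_eq]
      have habs : |x - (m:ℝ) - t| < δ := by
        rw [abs_lt]
        constructor
        · linarith [hdist.1]
        · linarith [hdist.2]
      calc |x - (m:ℝ) - t| < δ := habs
        _ ≤ ε := min_le_left _ _
  · rintro x ⟨m, t, ht, rfl⟩
    rw [Metric.mem_closure_iff]
    intro ε hε
    obtain ⟨t', ht', htt'⟩ := Metric.mem_closure_iff.mp ht ε hε
    refine ⟨m + t', ⟨m, t', ht', rfl⟩, ?_⟩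
    rw [Real.dist_eq] at htt' ⊢
    have : (m:ℝ) + t - (m + t') = t - t' := by ring
    rw [this]; exact htt'

lemma dset_ub (k : ℕ) (M : ℝ) : ∃ d ∈ Dset k, M < d := by
  obtain ⟨c, hc⟩ := exists_int_gt (M - (sg^[k]) 0)
  exact ⟨(sg^[k]) 0 + c, dset_add_int (dset_nonempty k) c, by linarith⟩

lemma dset_lb (k : ℕ) (M : ℝ) : ∃ d ∈ Dset k, d < M := by
  obtain ⟨c, hc⟩ := exists_int_lt (M - (sg^[k]) 0)
  exact ⟨(sg^[k]) 0 + c, dset_add_int (dset_nonempty k) c, by linarith⟩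

lemma sg_image_Ioo (a b : ℝ) : sg '' Ioo a b = Ioo (sg a) (sg b) := by
  apply Subset.antisymm
  · rintro _ ⟨u, hu, rfl⟩
    exact ⟨sg_strictMono hu.1, sg_strictMono hu.2⟩
  · intro y hy
    have hy01 : y ∈ Ioo (0:ℝ) 1 := ⟨lt_trans (sg_mem a).1 hy.1, lt_trans hy.2 (sg_mem b).2⟩
    refine ⟨sgInv y, ?_, sg_sgInv hy01⟩
    constructor
    · by_contra h
      push_neg at h
      have := sg_strictMono.monotone h
      rw [sg_sgInv hy01] at this
      linarith [hy.1]
    · by_contra h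
      push_neg at h
      have := sg_strictMono.monotone h
      rw [sg_sgInv hy01] at this
      linarith [hy.2]

lemma zero_mem_closure_sg {S : Set ℝ} (hlb : ∀ M, ∃ d ∈ S, d < M) :
    (0:ℝ) ∈ closure (sg '' S) := by
  rw [Metric.mem_closure_iff]
  intro ε hε
  obtain ⟨M, hM⟩ := eventually_atBot.mp (Metric.tendsto_nhds.mp sg_tendsto_bot ε hε)
  obtain ⟨d, hd, hdM⟩ := hlb M
  exact ⟨sg d, ⟨d, hd, rfl⟩, by rw [dist_comm]; exact hM d (le_of_lt hdM)⟩

lemma one_mem_closure_sg {S : Set ℝ} (hub : ∀ M, ∃ d ∈ S, M < d) :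
    (1:ℝ) ∈ closure (sg '' S) := by
  rw [Metric.mem_closure_iff]
  intro ε hε
  obtain ⟨M, hM⟩ := eventually_atTop.mp (Metric.tendsto_nhds.mp sg_tendsto_top ε hε)
  obtain ⟨d, hd, hdM⟩ := hub M
  exact ⟨sg d, ⟨d, hd, rfl⟩, by rw [dist_comm]; exact hM d (le_of_lt hdM)⟩

lemma closure_sg_image {S : Set ℝ} (hub : ∀ M, ∃ d ∈ S, M < d) (hlb : ∀ M, ∃ d ∈ S, d < M) :
    closure (sg '' S) = sg '' closure S ∪ {0, 1} := by
  apply Subset.antisymm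
  · intro x hx
    have hx01 : x ∈ Icc (0:ℝ) 1 := by
      have h1 : closure (sg '' S) ⊆ closure (Icc (0:ℝ) 1) := closure_mono (by
        rintro _ ⟨u, _, rfl⟩; exact Ioo_subset_Icc_self (sg_mem u))
      simpa [isClosed_Icc.closure_eq] using h1 hx
    by_cases h0 : x = 0
    · exact Or.inr (Or.inl h0)
    by_cases h1 : x = 1
    · exact Or.inr (Or.inr h1)
    have hxI : x ∈ Ioo (0:ℝ) 1 :=
      ⟨lt_of_le_of_ne hx01.1 (Ne.symm h0), lt_of_le_of_ne hx01.2 h1⟩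
    left
    refine ⟨sgInv x, ?_, sg_sgInv hxI⟩
    rw [Metric.mem_closure_iff]
    intro ε hε
    set u := sgInv x with hu
    have hxu : sg u = x := sg_sgInv hxI
    have himg : sg '' Ioo (u - ε) (u + ε) = Ioo (sg (u-ε)) (sg (u+ε)) := sg_image_Ioo _ _
    have hmemx : x ∈ Ioo (sg (u-ε)) (sg (u+ε)) := by
      rw [← hxu]
      exact ⟨sg_strictMono (by linarith), sg_strictMono (by linarith)⟩
    set δ := min (x - sg (u-ε)) (sg (u+ε) - x) with hδ
    have hδ0 : 0 < δ := lt_min (by linarith [hmemx.1]) (by linarith [hmemx.2])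
    obtain ⟨y, hy, hxy⟩ := Metric.mem_closure_iff.mp hx δ hδ0
    obtain ⟨v, hv, rfl⟩ := hy
    rw [Real.dist_eq, abs_lt] at hxy
    have hyIoo : sg v ∈ Ioo (sg (u-ε)) (sg (u+ε)) := by
      constructor
      · have : δ ≤ x - sg (u-ε) := min_le_left _ _
        linarith [hxy.2]
      · have : δ ≤ sg (u+ε) - x := min_le_right _ _
        linarith [hxy.1]
    have hvI : v ∈ Ioo (u - ε) (u + ε) := by
      constructor
      · by_contra h; push_neg at h
        exact absurd hyIoo.1 (not_lt.mpr (sg_strictMono.monotone h))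
      · by_contra h; push_neg at h
        exact absurd hyIoo.2 (not_lt.mpr (sg_strictMono.monotone h))
    refine ⟨v, hv, ?_⟩
    rw [Real.dist_eq, abs_lt]
    exact ⟨by linarith [hvI.2], by linarith [hvI.1]⟩
  · rintro x (hx | hx)
    · obtain ⟨u, hu, rfl⟩ := hx
      exact (image_closure_subset_closure_image sg_continuous) ⟨u, hu, rfl⟩
    · rcases hx with rfl | rfl
      · exact zero_mem_closure_sg hlb
      · exact one_mem_closure_sg hub

/-! ### Accumulation points -/

lemma accPt_mem_closure {x : ℝ} {S : Set ℝ} (h : AccPt x (𝓟 S)) : x ∈ closure S := by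
  rw [mem_closure_iff_nhds]
  intro U hU
  obtain ⟨y, hy, _⟩ := accPt_iff_nhds.mp h U hU
  exact ⟨y, hy.1, hy.2⟩

lemma accPt_sg_zero {S : Set ℝ} (hlb : ∀ M, ∃ d ∈ S, d < M) : AccPt (0:ℝ) (𝓟 (sg '' S)) := by
  rw [accPt_iff_nhds]
  intro U hU
  obtain ⟨ε, hε, hball⟩ := Metric.mem_nhds_iff.mp hU
  obtain ⟨M, hM⟩ := eventually_atBot.mp (Metric.tendsto_nhds.mp sg_tendsto_bot ε hε)
  obtain ⟨d, hd, hdM⟩ := hlb M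
  refine ⟨sg d, ⟨hball ?_, ⟨d, hd, rfl⟩⟩, ne_of_gt (sg_mem d).1⟩
  rw [Metric.mem_ball]
  exact hM d (le_of_lt hdM)

lemma accPt_sg_one {S : Set ℝ} (hub : ∀ M, ∃ d ∈ S, M < d) : AccPt (1:ℝ) (𝓟 (sg '' S)) := by
  rw [accPt_iff_nhds]
  intro U hU
  obtain ⟨ε, hε, hball⟩ := Metric.mem_nhds_iff.mp hU
  obtain ⟨M, hM⟩ := eventually_atTop.mp (Metric.tendsto_nhds.mp sg_tendsto_top ε hε)
  obtain ⟨d, hd, hdM⟩ := hub M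
  refine ⟨sg d, ⟨hball ?_, ⟨d, hd, rfl⟩⟩, ne_of_lt (sg_mem d).2⟩
  rw [Metric.mem_ball]
  exact hM d (le_of_lt hdM)

lemma accPt_sg_image {S : Set ℝ} {u : ℝ} (h : AccPt u (𝓟 S)) : AccPt (sg u) (𝓟 (sg '' S)) := by
  rw [accPt_iff_nhds] at h ⊢
  intro U hU
  obtain ⟨δ, hδ, hball⟩ := Metric.mem_nhds_iff.mp hU
  obtain ⟨ε, hε, hcont⟩ := Metric.continuous_iff.mp sg_continuous u δ hδ
  obtain ⟨v, hv, hvne⟩ := h (Metric.ball u ε) (Metric.ball_mem_nhds u hε)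
  refine ⟨sg v, ⟨hball (hcont v hv.1), ⟨v, hv.2, rfl⟩⟩, fun hc => hvne (sg_inj hc)⟩

lemma accPt_sg_image_rev {S : Set ℝ} {u : ℝ} (h : AccPt (sg u) (𝓟 (sg '' S))) :
    AccPt u (𝓟 S) := by
  rw [accPt_iff_nhds] at h ⊢
  intro V hV
  obtain ⟨ε, hε, hball⟩ := Metric.mem_nhds_iff.mp hV
  have hmem : sg u ∈ Ioo (sg (u-ε)) (sg (u+ε)) :=
    ⟨sg_strictMono (by linarith), sg_strictMono (by linarith)⟩
  set δ := min (sg u - sg (u-ε)) (sg (u+ε) - sg u) with hδ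
  have hδ0 : 0 < δ := lt_min (by linarith [hmem.1]) (by linarith [hmem.2])
  obtain ⟨y, hy, hyne⟩ := h (Metric.ball (sg u) δ) (Metric.ball_mem_nhds _ hδ0)
  obtain ⟨v, hv, rfl⟩ := hy.2
  have hyb := hy.1
  rw [Metric.mem_ball, Real.dist_eq, abs_lt] at hyb
  have hvIoo : sg v ∈ Ioo (sg (u-ε)) (sg (u+ε)) := by
    constructor
    · have : δ ≤ sg u - sg (u-ε) := min_le_left _ _
      linarith [hyb.1]
    · have : δ ≤ sg (u+ε) - sg u := min_le_right _ _
      linarith [hyb.2]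
  have hvI : v ∈ Ioo (u-ε) (u+ε) := by
    constructor
    · by_contra hc; push_neg at hc
      exact absurd hvIoo.1 (not_lt.mpr (sg_strictMono.monotone hc))
    · by_contra hc; push_neg at hc
      exact absurd hvIoo.2 (not_lt.mpr (sg_strictMono.monotone hc))
  refine ⟨v, ⟨hball ?_, hv⟩, fun hc => hyne (by rw [hc])⟩
  rw [Metric.mem_ball, Real.dist_eq, abs_lt]
  exact ⟨by linarith [hvI.1], by linarith [hvI.2]⟩

/-! ### Structure of closures of the `Dset k` -/

lemma zplus_union (A B : Set ℝ) : Zplus (A ∪ B) = Zplus A ∪ Zplus B := by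
  ext x
  constructor
  · rintro ⟨m, t, ht | ht, rfl⟩
    · exact Or.inl ⟨m, t, ht, rfl⟩
    · exact Or.inr ⟨m, t, ht, rfl⟩
  · rintro (⟨m, t, ht, rfl⟩ | ⟨m, t, ht, rfl⟩)
    · exact ⟨m, t, Or.inl ht, rfl⟩
    · exact ⟨m, t, Or.inr ht, rfl⟩

lemma sg_image_subset_Icc (S : Set ℝ) : sg '' S ⊆ Icc (0:ℝ) 1 := by
  rintro _ ⟨u, _, rfl⟩; exact Ioo_subset_Icc_self (sg_mem u)

lemma formulaF (k : ℕ) :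
    closure (Dset (k+1)) = Zplus (sg '' closure (Dset k)) ∪ Dset 0 := by
  rw [dset_succ_eq,
    closure_Zplus (sg_image_subset_Icc _) (zero_mem_closure_sg (dset_lb k)),
    closure_sg_image (dset_ub k) (dset_lb k), zplus_union_01]

lemma M1 (k : ℕ) : closure (Dset (k+1)) = Dset (k+1) ∪ closure (Dset k) := by
  induction k with
  | zero =>
    rw [formulaF 0, isClosed_dset0.closure_eq, dset_succ_eq]
  | succ k ih =>
    rw [formulaF (k+1), ih, image_union, zplus_union, ← dset_succ_eq, union_assoc,
      ← formulaF k, ih]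

lemma M2 {k : ℕ} {x : ℝ} (hx : x ∈ Dset (k+1)) : x ∉ closure (Dset k) := by
  induction k generalizing x with
  | zero =>
    obtain ⟨m, d, hd, rfl⟩ := hx
    rw [isClosed_dset0.closure_eq]
    rintro ⟨m', hm'⟩
    have : sg d = ((m' - m : ℤ) : ℝ) := by push_cast; linarith
    have h1 := (sg_mem d).1
    have h2 := (sg_mem d).2
    rw [this] at h1 h2
    have l1 : (0:ℤ) < m' - m := by exact_mod_cast h1
    have l2 : (m' - m : ℤ) < 1 := by exact_mod_cast h2
    omega
  | succ k ih =>
    obtain ⟨m, d, hd, rfl⟩ := hx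
    rw [formulaF k]
    rintro (⟨m', t, ⟨c, hc, rfl⟩, heq⟩ | ⟨m', hm'⟩)
    · obtain ⟨hmm, hdd⟩ := add_decomp (sg_mem d) (sg_mem c) heq
      exact ih hd (sg_inj hdd ▸ hc)
    · have : sg d = ((m' - m : ℤ) : ℝ) := by push_cast; linarith
      have h1 := (sg_mem d).1
      have h2 := (sg_mem d).2
      rw [this] at h1 h2
      have l1 : (0:ℤ) < m' - m := by exact_mod_cast h1
      have l2 : (m' - m : ℤ) < 1 := by exact_mod_cast h2
      omega

lemma M3 {k : ℕ} {d : ℝ} (hd : d ∈ Dset k) :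
    ∃ ε > 0, ∀ x ∈ closure (Dset k), |x - d| < ε → x = d := by
  induction k generalizing d with
  | zero =>
    obtain ⟨m, rfl⟩ := hd
    refine ⟨1/2, by norm_num, ?_⟩
    intro x hx hlt
    rw [isClosed_dset0.closure_eq] at hx
    obtain ⟨m', rfl⟩ := hx
    have : |((m' - m : ℤ) : ℝ)| < 1/2 := by
      have hcast : ((m' - m : ℤ):ℝ) = (m':ℝ) - m := by push_cast; ring
      rw [hcast]; exact hlt
    have h1 := abs_lt.mp this
    have l1 : (-1 : ℤ) < 2*(m' - m) := by
      have : (-1 : ℝ) < 2*((m' - m : ℤ) : ℝ) := by linarith [h1.1]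
      exact_mod_cast this
    have l2 : 2*(m' - m : ℤ) < 1 := by
      have : 2*((m' - m : ℤ) : ℝ) < 1 := by linarith [h1.2]
      exact_mod_cast this
    have : m' = m := by omega
    rw [this]
  | succ k ih =>
    obtain ⟨m, d', hd', rfl⟩ := hd
    obtain ⟨ε', hε', hiso⟩ := ih hd'
    set a := sg (d' - ε') with ha
    set b := sg (d' + ε') with hb
    have hab : a < sg d' ∧ sg d' < b :=
      ⟨sg_strictMono (by linarith), sg_strictMono (by linarith)⟩
    refine ⟨min (sg d' - a) (b - sg d'), lt_min (by linarith [hab.1]) (by linarith [hab.2]), ?_⟩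
    intro x hx hlt
    have hxab : a < x - m ∧ x - m < b := by
      have h1 := abs_lt.mp hlt
      constructor
      · have : min (sg d' - a) (b - sg d') ≤ sg d' - a := min_le_left _ _
        linarith [h1.1]
      · have : min (sg d' - a) (b - sg d') ≤ b - sg d' := min_le_right _ _
        linarith [h1.2]
    have hxm : x - m ∈ Ioo (0:ℝ) 1 :=
      ⟨lt_trans (sg_mem _).1 hxab.1, lt_trans hxab.2 (sg_mem _).2⟩
    rw [formulaF k] at hx
    rcases hx with ⟨m', t, ⟨c, hc, rfl⟩, heq⟩ | ⟨m', rfl⟩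
    · have heq' : (m:ℝ) + (x - m) = m' + sg c := by rw [← heq]; ring
      obtain ⟨hmm, hxc⟩ := add_decomp hxm (sg_mem c) heq'
      have hcI : c ∈ Ioo (d' - ε') (d' + ε') := by
        constructor
        · by_contra hcon; push_neg at hcon
          have := sg_strictMono.monotone hcon
          rw [← hxc] at this
          exact absurd hxab.1 (not_lt.mpr this)
        · by_contra hcon; push_neg at hcon
          have := sg_strictMono.monotone hcon
          rw [← hxc] at this
          exact absurd hxab.2 (not_lt.mpr this)
      have : c = d' := by
        apply hiso c hc
        rw [abs_lt]
        exact ⟨by linarith [hcI.1], by linarith [hcI.2]⟩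
      rw [heq, ← hmm, this]
    · exfalso
      have h1 : ((m' - m : ℤ) : ℝ) ∈ Ioo (0:ℝ) 1 := by
        have : ((m' - m : ℤ) : ℝ) = (m':ℝ) - m := by push_cast; ring
        rw [this]; exact hxm
      have l1 : (0:ℤ) < m' - m := by exact_mod_cast h1.1
      have l2 : (m' - m : ℤ) < 1 := by exact_mod_cast h1.2
      omega

lemma M4 {k : ℕ} {d : ℝ} (hd : d ∈ Dset k) : AccPt d (𝓟 (Dset (k+1))) := by
  induction k generalizing d with
  | zero =>
    obtain ⟨m, rfl⟩ := hd
    rw [accPt_iff_nhds]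
    intro U hU
    obtain ⟨ε, hε, hball⟩ := Metric.mem_nhds_iff.mp hU
    obtain ⟨M, hM⟩ := eventually_atBot.mp (Metric.tendsto_nhds.mp sg_tendsto_bot ε hε)
    obtain ⟨c, hc⟩ := exists_int_lt M
    refine ⟨(m:ℝ) + sg c, ⟨hball ?_, ⟨m, c, ⟨c, rfl⟩, rfl⟩⟩, ?_⟩
    · rw [Metric.mem_ball, Real.dist_eq]
      have : (m:ℝ) + sg c - m = sg c := by ring
      rw [this]
      have := hM c (le_of_lt hc)
      rw [Real.dist_eq, sub_zero] at this
      exact this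
    · intro hcon
      have h0 : sg c = 0 := by linarith
      linarith [(sg_mem c).1]
  | succ k ih =>
    obtain ⟨m, d', hd', rfl⟩ := hd
    rw [accPt_iff_nhds]
    intro U hU
    obtain ⟨ε, hε, hball⟩ := Metric.mem_nhds_iff.mp hU
    obtain ⟨ε', hε', hcont⟩ := Metric.continuous_iff.mp sg_continuous d' ε hε
    obtain ⟨v, hv, hvne⟩ := accPt_iff_nhds.mp (ih hd') (Metric.ball d' ε')
      (Metric.ball_mem_nhds _ hε')
    refine ⟨(m:ℝ) + sg v, ⟨hball ?_, ⟨m, v, hv.2, rfl⟩⟩, ?_⟩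
    · rw [Metric.mem_ball, Real.dist_eq]
      have : (m:ℝ) + sg v - ((m:ℝ) + sg d') = sg v - sg d' := by ring
      rw [this]
      have := hcont v hv.1
      rw [Real.dist_eq] at this
      exact this
    · intro hcon
      apply hvne
      apply sg_inj
      linarith [hcon]

lemma M5succ (k : ℕ) : {p : ℝ | AccPt p (𝓟 (Dset (k+1)))} = closure (Dset k) := by
  ext p
  constructor
  · intro hp
    have hpc : p ∈ closure (Dset (k+1)) := accPt_mem_closure hp
    rw [M1 k] at hpc
    rcases hpc with hpd | hpc
    · exfalso
      obtain ⟨ε, hε, hiso⟩ := M3 hpd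
      obtain ⟨y, hy, hyne⟩ := accPt_iff_nhds.mp hp (Metric.ball p ε)
        (Metric.ball_mem_nhds _ hε)
      apply hyne
      apply hiso y (subset_closure hy.2)
      rw [← Real.dist_eq]
      exact Metric.mem_ball.mp hy.1
    · exact hpc
  · intro hp
    simp only [mem_setOf_eq]
    rw [accPt_iff_nhds]
    intro U hU
    obtain ⟨ε, hε, hball⟩ := Metric.mem_nhds_iff.mp hU
    obtain ⟨d, hdb, hd⟩ := Metric.mem_closure_iff.mp hp ε hε
    have hdball : d ∈ Metric.ball p ε := by rwa [Metric.mem_ball, dist_comm]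
    obtain ⟨y, hy, hyne⟩ := accPt_iff_nhds.mp (M4 hdb) (Metric.ball p ε)
      (Metric.isOpen_ball.mem_nhds hdball)
    by_cases hyp : y = p
    · obtain ⟨y', hy', hyne'⟩ := accPt_iff_nhds.mp (M4 hdb) (Metric.ball p ε \ {y})
        ((Metric.isOpen_ball.sdiff isClosed_singleton).mem_nhds ⟨hdball, fun hc => hyne (Eq.symm (by simpa using hc : d = y))⟩)
      refine ⟨y', ⟨hball hy'.1.1, hy'.2⟩, ?_⟩
      intro hc
      exact hy'.1.2 (by rw [hc, hyp]; exact rfl)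
    · exact ⟨y, ⟨hball hy.1, hy.2⟩, hyp⟩

lemma M5zero : {p : ℝ | AccPt p (𝓟 (Dset 0))} = ∅ := by
  ext p
  simp only [mem_setOf_eq, mem_empty_iff_false, iff_false]
  intro hp
  have hpc : p ∈ closure (Dset 0) := accPt_mem_closure hp
  rw [isClosed_dset0.closure_eq] at hpc
  obtain ⟨ε, hε, hiso⟩ := M3 hpc
  obtain ⟨y, hy, hyne⟩ := accPt_iff_nhds.mp hp (Metric.ball p ε)
    (Metric.ball_mem_nhds _ hε)
  apply hyne
  apply hiso y (subset_closure hy.2)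
  rw [← Real.dist_eq]
  exact Metric.mem_ball.mp hy.1

/-! ### basepoints and generator set -/

lemma sg_iter_mem_Ioo (k : ℕ) : (sg^[k+1]) 0 ∈ Ioo (0:ℝ) 1 := by
  rw [Function.iterate_succ_apply']
  exact sg_mem _

lemma sg_iter_mem_Icc (k : ℕ) : (sg^[k]) 0 ∈ Icc (0:ℝ) 1 := by
  cases k with
  | zero => exact ⟨le_refl 0, by norm_num⟩
  | succ k => exact Ioo_subset_Icc_self (sg_iter_mem_Ioo k)

noncomputable def zpt (k : ℕ) : unitInterval := ⟨(sg^[k]) 0, sg_iter_mem_Icc k⟩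

lemma psi_sg_iter (i : ℕ) (c : ℤ) (w : ℝ) : Psi i c ((sg^[i]) w) = (sg^[i]) (w + c) := by
  induction i generalizing w with
  | zero => simp [psi_zero_def]
  | succ i ih =>
    rw [Function.iterate_succ_apply', Function.iterate_succ_apply', psi_sg, ih]

lemma sg_iter_strictMono (i : ℕ) : StrictMono (sg^[i]) := by
  induction i with
  | zero => exact fun a b h => h
  | succ i ih =>
    rw [Function.iterate_succ']
    exact sg_strictMono.comp ih

lemma gen_injective : Function.Injective gen := by
  have key : ∀ i j : ℕ, i < j → gen i ≠ gen j := by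
    intro i j hij hne
    have hx := congrArg (fun (g : IntervalHomeo) => (g (zpt (j+1)) : ℝ)) hne
    have hj : (gen j (zpt (j+1)) : ℝ) = (sg^[j+1]) 1 := by
      rw [gen_coe]
      show Psi (j+1) 1 ((sg^[j+1]) 0) = _
      rw [psi_sg_iter]; norm_num
    have hsplit : (sg^[j+1]) (0:ℝ) = (sg^[i+1]) ((sg^[j-i]) 0) := by
      rw [← Function.iterate_add_apply]
      congr 1
      omega
    have hi : (gen i (zpt (j+1)) : ℝ) = (sg^[i+1]) ((sg^[j-i]) 0 + 1) := by
      rw [gen_coe]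
      show Psi (i+1) 1 ((sg^[j+1]) 0) = _
      rw [hsplit, psi_sg_iter]
      norm_num
    have hj' : (sg^[j+1]) (1:ℝ) = (sg^[i+1]) ((sg^[j-i]) 1) := by
      rw [← Function.iterate_add_apply]
      congr 1
      omega
    rw [hi, hj, hj'] at hx
    have := sg_iter_strictMono (i+1) |>.injective hx
    have h1 : (sg^[j-i]) (0:ℝ) + 1 > 1 := by
      have hji : j - i = (j - i - 1) + 1 := by omega
      rw [hji]
      linarith [(sg_iter_mem_Ioo (j-i-1)).1]
    have h2 : (sg^[j-i]) (1:ℝ) < 1 := by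
      have hji : j - i = (j - i - 1) + 1 := by omega
      rw [hji, Function.iterate_succ_apply']
      exact (sg_mem _).2
    linarith [this ▸ h1]
  intro i j hij
  by_contra hne
  rcases lt_or_gt_of_ne hne with h | h
  · exact key i j h hij
  · exact key j i h hij.symm

/-! ### the orbit identity -/

noncomputable def gens (n : ℕ) : Finset IntervalHomeo :=
  @Finset.image _ _ (Classical.decEq _) gen (Finset.range n)

lemma gens_card (n : ℕ) : (gens n).card = n := by
  letI : DecidableEq IntervalHomeo := Classical.decEq _
  rw [gens, Finset.card_image_of_injective _ gen_injective, Finset.card_range]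

lemma gen_mem_closure {n j : ℕ} (hj : j < n) :
    gen j ∈ Subgroup.closure ((gens n : Finset IntervalHomeo) : Set IntervalHomeo) :=
  Subgroup.subset_closure (by
    simp only [gens, Finset.coe_image, Finset.coe_range, mem_image, mem_Iio]
    exact ⟨j, hj, rfl⟩)

noncomputable def gword (L : List (ℕ × ℤ)) : IntervalHomeo :=
  (L.map (fun p => (gen p.1) ^ p.2)).prod

lemma gword_mem {n : ℕ} {L : List (ℕ × ℤ)} (hL : ∀ p ∈ L, p.1 < n) :
    gword L ∈ Subgroup.closure ((gens n : Finset IntervalHomeo) : Set IntervalHomeo) := by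
  induction L with
  | nil => exact Subgroup.one_mem _
  | cons p L ih =>
    rw [gword, List.map_cons, List.prod_cons]
    exact Subgroup.mul_mem _ (Subgroup.zpow_mem _ (gen_mem_closure (hL p (List.mem_cons_self)))
      p.2) (ih (fun q hq => hL q (List.mem_cons_of_mem _ hq)))

lemma gword_apply (L : List (ℕ × ℤ)) (x : unitInterval) :
    ((gword L x : unitInterval) : ℝ) = evalWord L (x : ℝ) := by
  induction L generalizing x with
  | nil => rfl
  | cons p L ih =>
    rw [gword, List.map_cons, List.prod_cons, evalWord_cons]
    show ((gen p.1 ^ p.2) ((gword L) x) : ℝ) = _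
    rw [gen_zpow_coe, ih]

/-- the orbit of `zpt (k+1)` under the group generated by `gens n`, `k + 1 ≤ n`. -/
lemma orbit_eq {n k : ℕ} (hk : k + 1 ≤ n) :
    orbit (Subgroup.closure ((gens n : Finset IntervalHomeo) : Set IntervalHomeo))
      (zpt (k+1)) = {x : unitInterval | (x : ℝ) ∈ sg '' Dset k} := by
  apply Subset.antisymm
  · rintro y ⟨g, hg, rfl⟩
    have key : ∀ (g : IntervalHomeo),
        g ∈ Subgroup.closure ((gens n : Finset IntervalHomeo) : Set IntervalHomeo) →
        ∀ x : unitInterval, ((x:ℝ) ∈ sg '' Dset k ↔ ((g x : unitInterval) : ℝ) ∈ sg '' Dset k) := by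
      intro g hg
      induction hg using Subgroup.closure_induction with
      | mem f hf =>
        intro x
        simp only [gens, Finset.coe_image, Finset.coe_range, mem_image, mem_Iio] at hf
        obtain ⟨j, hj, rfl⟩ := hf
        constructor
        · rintro ⟨d, hd, hx⟩
          refine ⟨Psi j 1 d, psi_dset j 1 hd, ?_⟩
          rw [gen_coe, ← hx, ← psi_sg]
        · rintro ⟨d, hd, hx⟩
          refine ⟨Psi j (-1) d, psi_dset j (-1) hd, ?_⟩
          have : (x:ℝ) = Psi (j+1) (-1) ((gen j x : unitInterval) : ℝ) := by
            rw [gen_coe, psi_comp]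
            norm_num [psi_id]
          rw [this, ← hx, ← psi_sg]
      | one => intro x; rfl
      | mul f h hf hh ihf ihh =>
        intro x
        rw [ihh x]
        exact ihf (h x)
      | inv f hf ihf =>
        intro x
        have := ihf (f⁻¹ x)
        have happ : f (f⁻¹ x) = x := by
          show (f * f⁻¹) x = x
          rw [mul_inv_cancel]
          rfl
        rw [happ] at this
        exact this.symm
    have hz : ((zpt (k+1) : unitInterval) : ℝ) ∈ sg '' Dset k := by
      show (sg^[k+1]) 0 ∈ _
      rw [Function.iterate_succ_apply']
      exact ⟨(sg^[k]) 0, dset_nonempty k, rfl⟩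
    exact (key g hg (zpt (k+1))).mp hz
  · rintro x hx
    obtain ⟨d, hd, hxd⟩ := hx
    obtain ⟨L, hL, hev⟩ := exists_word hd
    refine ⟨gword L, gword_mem (fun p hp => lt_of_le_of_lt (Nat.lt_succ_iff.mp
      (Nat.lt_succ_of_le (hL p hp))) hk), ?_⟩
    apply Subtype.ext
    rw [gword_apply]
    show evalWord L ((sg^[k+1]) 0) = _
    rw [hev, hxd]

/-! ### transfer to the subtype -/

lemma accPt_subtype (S : Set ℝ) (hS : S ⊆ Icc (0:ℝ) 1) (p : unitInterval) :
    AccPt p (𝓟 {x : unitInterval | (x:ℝ) ∈ S}) ↔ AccPt (p:ℝ) (𝓟 S) := by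
  rw [accPt_iff_nhds, accPt_iff_nhds]
  constructor
  · intro h U hU
    have hV : (Subtype.val ⁻¹' U : Set unitInterval) ∈ 𝓝 p :=
      (continuous_subtype_val.continuousAt).preimage_mem_nhds hU
    obtain ⟨y, hy, hyne⟩ := h _ hV
    exact ⟨(y:ℝ), ⟨hy.1, hy.2⟩, fun hc => hyne (Subtype.ext hc)⟩
  · intro h U hU
    obtain ⟨ε, hε, hball⟩ := Metric.mem_nhds_iff.mp hU
    obtain ⟨y, hy, hyne⟩ := h (Metric.ball (p:ℝ) ε) (Metric.ball_mem_nhds _ hε)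
    refine ⟨⟨y, hS hy.2⟩, ⟨hball ?_, hy.2⟩, fun hc => hyne (congrArg Subtype.val hc)⟩
    rw [Metric.mem_ball, Subtype.dist_eq]
    exact hy.1

lemma closure_subtype' (S : Set ℝ) (hS : S ⊆ Icc (0:ℝ) 1) :
    closure {x : unitInterval | (x:ℝ) ∈ S} = {x : unitInterval | (x:ℝ) ∈ closure S} := by
  ext x
  rw [mem_setOf_eq, closure_subtype]
  have himg : (Subtype.val '' {x : unitInterval | (x:ℝ) ∈ S}) = S := by
    apply Subset.antisymm
    · rintro _ ⟨y, hy, rfl⟩; exact hy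
    · intro t ht; exact ⟨⟨t, hS ht⟩, ht, rfl⟩
  rw [himg]

/-- ℝ-level accumulation set of `sg '' Dset k`. -/
lemma accR (k : ℕ) :
    {q : ℝ | AccPt q (𝓟 (sg '' Dset k))} =
      sg '' {q : ℝ | AccPt q (𝓟 (Dset k))} ∪ {0, 1} := by
  apply Subset.antisymm
  · intro q hq
    have hqc : q ∈ closure (sg '' Dset k) := accPt_mem_closure hq
    rw [closure_sg_image (dset_ub k) (dset_lb k)] at hqc
    rcases hqc with ⟨u, hu, rfl⟩ | hq01
    · exact Or.inl ⟨u, accPt_sg_image_rev hq, rfl⟩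
    · exact Or.inr hq01
  · rintro q (⟨u, hu, rfl⟩ | hq01)
    · exact accPt_sg_image hu
    · rcases hq01 with rfl | rfl
      · exact accPt_sg_zero (dset_lb k)
      · exact accPt_sg_one (dset_ub k)

/-- the closure on the ℝ level -/
lemma clR (k : ℕ) :
    closure (sg '' Dset k) = sg '' closure (Dset k) ∪ {0, 1} :=
  closure_sg_image (dset_ub k) (dset_lb k)


/-- For every `n ≥ 1` there is a group of orientation-preserving
homeomorphisms of `[0,1]` generated by `n` elements admitting a nested chain of orbits
`O(z¹), …, O(zⁿ)`: the accumulation set of `O(z¹)` is exactly `{0,1}`, and for each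
`1 ≤ k ≤ n-1` the orbit `O(z^{k+1})` is disjoint from the closure of `O(z^k)` and its
accumulation set is exactly that closure. (So `G` admits a level `n` orbit.) -/
theorem stmt12 (n : ℕ) (hn : 1 ≤ n) :
    ∃ (s : Finset IntervalHomeo) (z : ℕ → unitInterval), s.card = n ∧
      ∀ G : Subgroup IntervalHomeo, G = Subgroup.closure (s : Set IntervalHomeo) →
        (∀ k, 1 ≤ k → k ≤ n → z k ∈ openI) ∧
        {p | AccPt p (𝓟 (orbit G (z 1)))} = {0, 1} ∧
        ∀ k, 1 ≤ k → k ≤ n - 1 →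
          Disjoint (orbit G (z (k + 1))) (closure (orbit G (z k))) ∧
          {p | AccPt p (𝓟 (orbit G (z (k + 1))))} = closure (orbit G (z k)) := by
  refine ⟨gens n, zpt, gens_card n, ?_⟩
  rintro G rfl
  have horb : ∀ k : ℕ, k + 1 ≤ n →
      orbit (Subgroup.closure ((gens n : Finset IntervalHomeo) : Set IntervalHomeo))
        (zpt (k+1)) = {x : unitInterval | (x : ℝ) ∈ sg '' Dset k} := fun k hk => orbit_eq hk
  have hsub : ∀ k : ℕ, sg '' Dset k ⊆ Icc (0:ℝ) 1 := fun k => sg_image_subset_Icc _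
  -- accumulation sets of the orbits, in the subtype
  have hacc : ∀ k : ℕ, k + 1 ≤ n →
      {p : unitInterval | AccPt p (𝓟 (orbit
          (Subgroup.closure ((gens n : Finset IntervalHomeo) : Set IntervalHomeo))
          (zpt (k+1))))} =
        {p : unitInterval | (p:ℝ) ∈ sg '' {q : ℝ | AccPt q (𝓟 (Dset k))} ∪ {0, 1}} := by
    intro k hk
    ext p
    rw [mem_setOf_eq, horb k hk, accPt_subtype _ (hsub k)]
    exact Set.ext_iff.mp (accR k) (p:ℝ)
  have hclo : ∀ k : ℕ, k + 1 ≤ n →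
      closure (orbit (Subgroup.closure ((gens n : Finset IntervalHomeo) :
          Set IntervalHomeo)) (zpt (k+1))) =
        {x : unitInterval | (x:ℝ) ∈ sg '' closure (Dset k) ∪ {0, 1}} := by
    intro k hk
    rw [horb k hk, closure_subtype' _ (hsub k), clR k]
  refine ⟨?_, ?_, ?_⟩
  · -- basepoints interior
    intro k hk1 _
    obtain ⟨k', rfl⟩ : ∃ k', k = k' + 1 := ⟨k - 1, by omega⟩
    exact sg_iter_mem_Ioo k'
  · -- accumulation set of the first orbit
    have h1 : (0:ℕ) + 1 ≤ n := by omega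
    rw [show (1:ℕ) = 0 + 1 from rfl, hacc 0 h1]
    have hempty : {q : ℝ | AccPt q (𝓟 (Dset 0))} = ∅ := M5zero
    rw [hempty, image_empty, empty_union]
    ext p
    simp only [mem_setOf_eq, mem_insert_iff, mem_singleton_iff]
    constructor
    · rintro (h | h)
      · exact Or.inl (Subtype.ext h)
      · exact Or.inr (Subtype.ext h)
    · rintro (rfl | rfl)
      · exact Or.inl rfl
      · exact Or.inr rfl
  · -- the nested chain
    intro k hk1 hk2
    obtain ⟨j, rfl⟩ : ∃ j, k = j + 1 := ⟨k - 1, by omega⟩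
    have hj2 : (j+1) + 1 ≤ n := by omega
    have hj1 : j + 1 ≤ n := by omega
    constructor
    · -- disjointness
      rw [horb (j+1) hj2, hclo j hj1]
      rw [Set.disjoint_left]
      rintro x ⟨d, hd, hxd⟩ hx2
      rcases hx2 with ⟨c, hc, hxc⟩ | hx01
      · rw [← hxd] at hxc
        exact M2 hd (sg_inj hxc ▸ hc)
      · rcases hx01 with h | h
        · rw [← hxd] at h; linarith [(sg_mem d).1]
        · rw [mem_singleton_iff] at h
          rw [← hxd] at h; linarith [(sg_mem d).2]
    · -- accumulation set equality
      rw [hacc (j+1) hj2, hclo j hj1, M5succ j]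
end
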